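/- Let $n=2$ and $\kappa>0$, and set $K=2+2\kappa$. The function $w(r)=\kappa r+\frac{K}{r}$ satisfies $\mathcal J w(r)\le 0$ for every $r\in(0,\infty)$; more precisely, $\mathcal J w\le 0$ on $(0,\sqrt2]$ because $w'(r)^2\ge 1$ there, and $\mathcal J w(r)\le -\frac{1}{r}<0$ for $r\in[\sqrt2,\infty)$. -/

import Mathlib

/-- The rotationally symmetric self-expander operator
`𝒥 u (r) = u''/(1+u'^2) + ((n-1)/r) u' + (r/2) u' - u/2`. -/
noncomputable def Jop (n : ℕ) (u : ℝ → ℝ) (r : ℝ) : ℝ :=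
  deriv (deriv u) r / (1 + (deriv u r) ^ 2) + ((n : ℝ) - 1) / r * deriv u r
    + r / 2 * deriv u r - u r / 2

lemma d1 (κ K r : ℝ) (hr : r ≠ 0) :
    deriv (fun r => κ * r + K / r) r = κ - K / r ^ 2 := by
  have h1 : HasDerivAt (fun x : ℝ => κ * x) κ r := by
    simpa using (hasDerivAt_id r).const_mul κ
  have h2 : HasDerivAt (fun x : ℝ => K / x) (K * -(r ^ 2)⁻¹) r := by
    simpa [div_eq_mul_inv] using (hasDerivAt_inv hr).const_mul K
  have h5 : HasDerivAt (fun x : ℝ => κ * x + K / x) (κ + K * -(r ^ 2)⁻¹) r := h1.add h2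
  have := h5.deriv
  rw [this]; field_simp; ring

lemma d2 (κ K r : ℝ) (hr : r ≠ 0) :
    deriv (deriv (fun r => κ * r + K / r)) r = 2 * K / r ^ 3 := by
  have hev : deriv (fun r => κ * r + K / r) =ᶠ[nhds r] fun x => κ - K / x ^ 2 := by
    filter_upwards [eventually_ne_nhds hr] with x hx
    exact d1 κ K x hx
  rw [hev.deriv_eq]
  have h1 : HasDerivAt (fun x : ℝ => κ - K / x ^ 2) (2 * K / r ^ 3) r := by
    have h2 : HasDerivAt (fun x : ℝ => x ^ 2) (2 * r) r := by
      simpa using hasDerivAt_pow 2 r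
    have h3 : HasDerivAt (fun x : ℝ => K / x ^ 2) (-(K * (2 * r)) / (r ^ 2) ^ 2) r := by
      have h4 : HasDerivAt (fun x : ℝ => K / x ^ 2) ((0 * r ^ 2 - K * (2 * r)) / (r ^ 2) ^ 2) r :=
        (hasDerivAt_const r K).div h2 (pow_ne_zero 2 hr)
      simpa using h4
    have : HasDerivAt (fun x : ℝ => κ - K / x ^ 2) (0 - -(K * (2 * r)) / (r ^ 2) ^ 2) r :=
      (hasDerivAt_const r κ).sub h3
    convert this using 1
    field_simp; ring
  exact h1.deriv

lemma key (κ K r : ℝ) (hK : K = 2 + 2 * κ) (hr : 0 < r) :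
    Jop 2 (fun r => κ * r + K / r) r
      = 2 * K / (r ^ 3 * (1 + (κ - K / r ^ 2) ^ 2)) - K / r ^ 3 - (2 + κ) / r := by
  have hr0 : r ≠ 0 := ne_of_gt hr
  have hA : (0:ℝ) < 1 + (κ - K / r ^ 2) ^ 2 := by positivity
  rw [Jop, d1 κ K r hr0, d2 κ K r hr0]
  rw [hK]
  field_simp
  ring

theorem stmt1 (κ : ℝ) (hκ : 0 < κ) (K : ℝ) (hK : K = 2 + 2 * κ) :
    (∀ r : ℝ, 0 < r → Jop 2 (fun r => κ * r + K / r) r ≤ 0) ∧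
    (∀ r : ℝ, 0 < r → r ≤ Real.sqrt 2 →
      1 ≤ (deriv (fun r => κ * r + K / r) r) ^ 2) ∧
    (∀ r : ℝ, Real.sqrt 2 ≤ r → Jop 2 (fun r => κ * r + K / r) r ≤ -(1 / r)) := by
  have hK0 : (0:ℝ) < K := by rw [hK]; linarith
  -- derivative lower bound on (0, √2]
  have hsq : ∀ r : ℝ, 0 < r → r ≤ Real.sqrt 2 →
      1 ≤ (κ - K / r ^ 2) ^ 2 := by
    intro r hr hr2
    have hr2' : r ^ 2 ≤ 2 := by
      have := pow_le_pow_left₀ hr.le hr2 2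
      simpa [Real.sq_sqrt (by norm_num : (0:ℝ) ≤ 2)] using this
    have h1 : K / 2 ≤ K / r ^ 2 :=
      div_le_div_of_nonneg_left hK0.le (by positivity) hr2'
    have h2 : κ - K / r ^ 2 ≤ -1 := by
      rw [hK] at h1 ⊢; linarith
    nlinarith
  -- bound on [√2, ∞)
  have hfar : ∀ r : ℝ, Real.sqrt 2 ≤ r →
      Jop 2 (fun r => κ * r + K / r) r ≤ -(1 / r) := by
    intro r hr2
    have hs2 : (0:ℝ) < Real.sqrt 2 := Real.sqrt_pos.mpr (by norm_num)
    have hr : 0 < r := lt_of_lt_of_le hs2 hr2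
    have hr2' : 2 ≤ r ^ 2 := by
      have := pow_le_pow_left₀ hs2.le hr2 2
      simpa [Real.sq_sqrt (by norm_num : (0:ℝ) ≤ 2)] using this
    rw [key κ K r hK hr]
    have hA : (1:ℝ) ≤ 1 + (κ - K / r ^ 2) ^ 2 := by nlinarith [sq_nonneg (κ - K / r ^ 2)]
    have h1 : 2 * K / (r ^ 3 * (1 + (κ - K / r ^ 2) ^ 2)) ≤ 2 * K / r ^ 3 := by
      apply div_le_div_of_nonneg_left (by positivity) (by positivity)
      nlinarith [pow_pos hr 3]
    have heq : 2 * K / r ^ 3 - K / r ^ 3 = K / r ^ 3 := by ring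
    have h2 : K / r ^ 3 ≤ (1 + κ) / r := by
      rw [div_le_div_iff₀ (by positivity) hr, hK]
      nlinarith [mul_le_mul_of_nonneg_left hr2'
        (mul_nonneg (by linarith : (0:ℝ) ≤ 1 + κ) hr.le)]
    have h3 : (1 + κ) / r - (2 + κ) / r = -(1 / r) := by
      field_simp; ring
    linarith
  refine ⟨?_, ?_, hfar⟩
  · intro r hr
    rcases le_total r (Real.sqrt 2) with h | h
    · rw [key κ K r hK hr]
      have hA : (2:ℝ) ≤ 1 + (κ - K / r ^ 2) ^ 2 := by
        have := hsq r hr h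
        linarith
      have h1 : 2 * K / (r ^ 3 * (1 + (κ - K / r ^ 2) ^ 2)) ≤ 2 * K / (r ^ 3 * 2) := by
        apply div_le_div_of_nonneg_left (by positivity) (by positivity)
        have := pow_pos hr 3
        nlinarith
      have h2 : 2 * K / (r ^ 3 * 2) = K / r ^ 3 := by
        field_simp
      have h3 : (0:ℝ) < (2 + κ) / r := by positivity
      linarith
    · have := hfar r h
      have : Jop 2 (fun r => κ * r + K / r) r ≤ -(1 / r) := this
      have h4 : (0:ℝ) < 1 / r := by positivity
      linarith
  · intro r hr hr2
    rw [d1 κ K r (ne_of_gt hr)]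
    exact hsq r hr hr2
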